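/- arXiv:2010.04754 — 4 statements merged into one kernel-verified Lean document; each statement's English description precedes it below -/
import Mathlib

section
/- Let E and F be finite-dimensional real inner product spaces, A : E →ₗ F a linear map with adjoint A† : F →ₗ E, and Δt > 0. Suppose sequences uⁿ ∈ E (n = 0,1,2,…) and v^{n+1/2} ∈ F (n = 0,1,2,…) satisfy the staggered leapfrog scheme (u^{n+1} − uⁿ)/Δt = −A† v^{n+1/2} for all n ≥ 0 and (v^{n+1/2} − v^{n−1/2})/Δt = A uⁿ for all n ≥ 1. Then the quantity Cⁿ = ‖uⁿ‖² + ‖(v^{n+1/2} + v^{n−1/2})/2‖² − (Δt/2)²·‖A uⁿ‖² has the same value for every n ≥ 1. -/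
open RealInnerProductSpace

lemma leapfrog_step
    {E F : Type*} [NormedAddCommGroup E] [InnerProductSpace ℝ E]
    [NormedAddCommGroup F] [InnerProductSpace ℝ F]
    (A : E →ₗ[ℝ] F) (B : F →ₗ[ℝ] E)
    (hadj : ∀ (x : E) (y : F), ⟪A x, y⟫ = ⟪x, B y⟫)
    (Δt : ℝ) (a b : E) (p q r : F)
    (e1 : b - a = -(Δt • B q)) (e2 : q - p = Δt • A a) (e3 : r - q = Δt • A b) :
    ‖b‖^2 + ‖(2:ℝ)⁻¹ • (r + q)‖^2 - (Δt/2)^2 * ‖A b‖^2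
      = ‖a‖^2 + ‖(2:ℝ)⁻¹ • (q + p)‖^2 - (Δt/2)^2 * ‖A a‖^2 := by
  have hp : p = q - Δt • A a := by rw [← e2]; abel
  have hr : r = q + Δt • A b := by rw [← e3]; abel
  have hBa : ⟪B q, a⟫ = ⟪A a, q⟫ := by rw [real_inner_comm a (B q), ← hadj]
  have hBb : ⟪B q, b⟫ = ⟪A b, q⟫ := by rw [real_inner_comm b (B q), ← hadj]
  have key : ⟪b, b⟫ - ⟪a, a⟫ = -Δt * ⟪A a, q⟫ - Δt * ⟪A b, q⟫ := by
    have h : ⟪b - a, a + b⟫ = -Δt * ⟪B q, a + b⟫ := by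
      rw [e1, ← neg_smul, real_inner_smul_left]
    simp only [inner_sub_left, inner_add_right] at h
    have hc : ⟪b, a⟫ = ⟪a, b⟫ := real_inner_comm a b
    rw [hBa, hBb] at h
    linarith
  have nb : ‖b‖^2 = ⟪b, b⟫ := (real_inner_self_eq_norm_sq b).symm
  have na : ‖a‖^2 = ⟪a, a⟫ := (real_inner_self_eq_norm_sq a).symm
  have nAb : ‖A b‖^2 = ⟪A b, A b⟫ := (real_inner_self_eq_norm_sq (A b)).symm
  have nAa : ‖A a‖^2 = ⟪A a, A a⟫ := (real_inner_self_eq_norm_sq (A a)).symm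
  have n1 : ‖(2:ℝ)⁻¹ • (r + q)‖^2 = ⟪(2:ℝ)⁻¹ • (r + q), (2:ℝ)⁻¹ • (r + q)⟫ :=
    (real_inner_self_eq_norm_sq _).symm
  have n2 : ‖(2:ℝ)⁻¹ • (q + p)‖^2 = ⟪(2:ℝ)⁻¹ • (q + p), (2:ℝ)⁻¹ • (q + p)⟫ :=
    (real_inner_self_eq_norm_sq _).symm
  rw [nb, na, nAb, nAa, n1, n2, hp, hr]
  simp only [inner_add_left, inner_add_right, inner_sub_left, inner_sub_right,
    real_inner_smul_left, real_inner_smul_right]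
  linear_combination key + (Δt/2) * real_inner_comm (A b) q + (Δt/2) * real_inner_comm (A a) q

/-- For the staggered leapfrog scheme `(u^{n+1} − uⁿ)/Δt = −A† v^{n+1/2}`,
`(v^{n+1/2} − v^{n−1/2})/Δt = A uⁿ`, the quantity
`Cⁿ = ‖uⁿ‖² + ‖(v^{n+1/2}+v^{n−1/2})/2‖² − (Δt/2)²‖A uⁿ‖²` is the same for all `n ≥ 1`.
Here `v n` denotes `v^{n+1/2}` and `B = A†` is characterized by `⟪A u, v⟫ = ⟪u, B v⟫`. -/
theorem stmt_9
    {E F : Type*} [NormedAddCommGroup E] [InnerProductSpace ℝ E] [FiniteDimensional ℝ E]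
    [NormedAddCommGroup F] [InnerProductSpace ℝ F] [FiniteDimensional ℝ F]
    (A : E →ₗ[ℝ] F) (B : F →ₗ[ℝ] E)
    (hadj : ∀ (x : E) (y : F), ⟪A x, y⟫ = ⟪x, B y⟫)
    (Δt : ℝ) (hΔt : 0 < Δt)
    (u : ℕ → E) (v : ℕ → F)
    (h1 : ∀ n : ℕ, (Δt)⁻¹ • (u (n + 1) - u n) = -(B (v n)))
    (h2 : ∀ n : ℕ, 1 ≤ n → (Δt)⁻¹ • (v n - v (n - 1)) = A (u n)) :
    ∀ m n : ℕ, 1 ≤ m → 1 ≤ n →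
      ‖u m‖^2 + ‖(2:ℝ)⁻¹ • (v m + v (m - 1))‖^2 - (Δt / 2)^2 * ‖A (u m)‖^2
        = ‖u n‖^2 + ‖(2:ℝ)⁻¹ • (v n + v (n - 1))‖^2 - (Δt / 2)^2 * ‖A (u n)‖^2 := by
  have hne : Δt ≠ 0 := ne_of_gt hΔt
  have h1' : ∀ n : ℕ, u (n + 1) - u n = -(Δt • B (v n)) := by
    intro n
    have h := h1 n
    rw [inv_smul_eq_iff₀ hne] at h
    rw [h, smul_neg]
  have h2' : ∀ n : ℕ, 1 ≤ n → v n - v (n - 1) = Δt • A (u n) := by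
    intro n hn
    have h := h2 n hn
    rwa [inv_smul_eq_iff₀ hne] at h
  have step : ∀ n : ℕ, 1 ≤ n →
      ‖u (n+1)‖^2 + ‖(2:ℝ)⁻¹ • (v (n+1) + v n)‖^2 - (Δt / 2)^2 * ‖A (u (n+1))‖^2
        = ‖u n‖^2 + ‖(2:ℝ)⁻¹ • (v n + v (n - 1))‖^2 - (Δt / 2)^2 * ‖A (u n)‖^2 := by
    intro n hn
    have e3 : v (n+1) - v n = Δt • A (u (n+1)) := by
      have h := h2' (n+1) (by omega)
      simpa using h
    exact leapfrog_step A B hadj Δt (u n) (u (n+1)) (v (n-1)) (v n) (v (n+1))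
      (h1' n) (h2' n hn) e3
  have aux : ∀ k : ℕ,
      ‖u (k+1)‖^2 + ‖(2:ℝ)⁻¹ • (v (k+1) + v (k+1-1))‖^2 - (Δt / 2)^2 * ‖A (u (k+1))‖^2
        = ‖u 1‖^2 + ‖(2:ℝ)⁻¹ • (v 1 + v 0)‖^2 - (Δt / 2)^2 * ‖A (u 1)‖^2 := by
    intro k
    induction k with
    | zero => rfl
    | succ k ih =>
      have hs := step (k+1) (by omega)
      simp only [Nat.add_sub_cancel] at hs ih ⊢
      rw [hs, ih]
  intro m n hm hn
  obtain ⟨m', rfl⟩ : ∃ k, m = k + 1 := ⟨m - 1, by omega⟩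
  obtain ⟨n', rfl⟩ : ∃ k, n = k + 1 := ⟨n - 1, by omega⟩
  exact (aux m').trans (aux n').symm
end

section
/- Let E and F be finite-dimensional real inner product spaces, A : E →ₗ F a linear map with adjoint A† : F →ₗ E, and Δt > 0. Suppose sequences uⁿ ∈ E (n = 0,1,2,…) and v^{n+1/2} ∈ F (n = 0,1,2,…) satisfy the staggered leapfrog scheme (u^{n+1} − uⁿ)/Δt = −A† v^{n+1/2} for all n ≥ 0 and (v^{n+1/2} − v^{n−1/2})/Δt = A uⁿ for all n ≥ 1. Then the quantity C^{n+1/2} = ‖(u^{n+1} + uⁿ)/2‖² + ‖v^{n+1/2}‖² − (Δt/2)²·‖A† v^{n+1/2}‖² has the same value for every n ≥ 0. -/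
open RealInnerProductSpace

/-- For the staggered leapfrog scheme `(u^{n+1} − uⁿ)/Δt = −A† v^{n+1/2}`,
`(v^{n+1/2} − v^{n−1/2})/Δt = A uⁿ`, the quantity
`C^{n+1/2} = ‖(u^{n+1}+uⁿ)/2‖² + ‖v^{n+1/2}‖² − (Δt/2)²‖A† v^{n+1/2}‖²` is the same for
all `n ≥ 0`. Here `v n` denotes `v^{n+1/2}` and `B = A†` satisfies `⟪A u, v⟫ = ⟪u, B v⟫`. -/
theorem stmt_10
    {E F : Type*} [NormedAddCommGroup E] [InnerProductSpace ℝ E] [FiniteDimensional ℝ E]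
    [NormedAddCommGroup F] [InnerProductSpace ℝ F] [FiniteDimensional ℝ F]
    (A : E →ₗ[ℝ] F) (B : F →ₗ[ℝ] E)
    (hadj : ∀ (x : E) (y : F), ⟪A x, y⟫ = ⟪x, B y⟫)
    (Δt : ℝ) (hΔt : 0 < Δt)
    (u : ℕ → E) (v : ℕ → F)
    (h1 : ∀ n : ℕ, (Δt)⁻¹ • (u (n + 1) - u n) = -(B (v n)))
    (h2 : ∀ n : ℕ, 1 ≤ n → (Δt)⁻¹ • (v n - v (n - 1)) = A (u n)) :
    ∀ m n : ℕ,
      ‖(2:ℝ)⁻¹ • (u (m + 1) + u m)‖^2 + ‖v m‖^2 - (Δt / 2)^2 * ‖B (v m)‖^2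
        = ‖(2:ℝ)⁻¹ • (u (n + 1) + u n)‖^2 + ‖v n‖^2 - (Δt / 2)^2 * ‖B (v n)‖^2 := by
  have hΔ : Δt ≠ 0 := hΔt.ne'
  have hu : ∀ n, u (n + 1) = u n - Δt • B (v n) := by
    intro n
    have h := congrArg (fun x => Δt • x) (h1 n)
    simp only [smul_smul, mul_inv_cancel₀ hΔ, one_smul] at h
    rw [sub_eq_iff_eq_add] at h
    rw [h, smul_neg]; abel
  have hv : ∀ n, v (n + 1) = v n + Δt • A (u (n + 1)) := by
    intro n
    have h := congrArg (fun x => Δt • x) (h2 (n + 1) (Nat.le_add_left 1 n))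
    simp only [smul_smul, mul_inv_cancel₀ hΔ, one_smul, Nat.add_sub_cancel] at h
    rw [sub_eq_iff_eq_add] at h
    rw [h]; abel
  have key : ∀ n, ‖(2:ℝ)⁻¹ • (u (n + 1 + 1) + u (n + 1))‖^2 + ‖v (n + 1)‖^2
      - (Δt / 2)^2 * ‖B (v (n + 1))‖^2
      = ‖(2:ℝ)⁻¹ • (u (n + 1) + u n)‖^2 + ‖v n‖^2 - (Δt / 2)^2 * ‖B (v n)‖^2 := by
    intro n
    have hun : u n = u (n + 1) + Δt • B (v n) := by rw [hu n]; abel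
    rw [hu (n + 1), hv n, hun]
    set a := u (n + 1)
    set w := v n
    simp only [map_add, map_smul, ← real_inner_self_eq_norm_sq]
    simp only [inner_add_left, inner_add_right, inner_sub_left, inner_sub_right,
      inner_smul_left, inner_smul_right, RCLike.conj_to_real]
    have e1 : ⟪a, B w⟫ = ⟪A a, w⟫ := (hadj a w).symm
    have e2 : ⟪B w, a⟫ = ⟪A a, w⟫ := by rw [real_inner_comm]; exact e1
    have e3 : ⟪a, B (A a)⟫ = ⟪A a, A a⟫ := (hadj a (A a)).symm
    have e4 : ⟪B (A a), a⟫ = ⟪A a, A a⟫ := by rw [real_inner_comm]; exact e3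
    have e5 : ⟪w, A a⟫ = ⟪A a, w⟫ := real_inner_comm _ _
    have e6 : ⟪B w, B (A a)⟫ = ⟪B (A a), B w⟫ := real_inner_comm _ _
    rw [e1, e2, e3, e4, e5, e6]
    ring
  have base : ∀ n, ‖(2:ℝ)⁻¹ • (u (n + 1) + u n)‖^2 + ‖v n‖^2 - (Δt / 2)^2 * ‖B (v n)‖^2
      = ‖(2:ℝ)⁻¹ • (u (0 + 1) + u 0)‖^2 + ‖v 0‖^2 - (Δt / 2)^2 * ‖B (v 0)‖^2 := by
    intro n
    induction n with
    | zero => rfl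
    | succ k ih => rw [key k, ih]
  intro m n
  rw [base m, base n]
end

section
/- Fix an integer N ≥ 2, Δx > 0, Δt > 0, and let ρ : {0,…,N−1} → ℝ and τ : {0,…,N−2} → ℝ have positive values. Set s = √(max τ / min ρ), where max τ = max_{0≤i≤N−2} τ_i and min ρ = min_{0≤i≤N−1} ρ_i. Then for any primal-grid function u and dual-grid functions v, w, the quantity C = ‖u‖_ρ² + ‖(v + w)/2‖_τ² − (Δt/2)²·‖Au‖_τ², with (Au)_i = τ_i·(u_{i+1} − u_i)/Δx, satisfies C ≥ (1 − (s·Δt/Δx)²)·‖u‖_ρ² + ‖(v + w)/2‖_τ². In particular, C ≥ 0 whenever s·Δt/Δx ≤ 1. -/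
/-- Positivity of the primal conserved quantity under the generalized CFL condition:
with `s = √(max τ / min ρ)`, the quantity
`C = ‖u‖_ρ² + ‖(v+w)/2‖_τ² − (Δt/2)² ‖Au‖_τ²` satisfies
`C ≥ (1 − (sΔt/Δx)²)‖u‖_ρ² + ‖(v+w)/2‖_τ²`, hence `C ≥ 0` whenever `sΔt/Δx ≤ 1`. -/
theorem stmt_16
    (N : ℕ) (hN : 2 ≤ N) (Δx Δt : ℝ) (hΔx : 0 < Δx) (hΔt : 0 < Δt)
    (ρ τ : ℕ → ℝ)
    (hρ : ∀ i < N, 0 < ρ i) (hτ : ∀ i < N - 1, 0 < τ i)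
    (s : ℝ)
    (hs : s = Real.sqrt
      ((Finset.range (N - 1)).sup' (Finset.nonempty_range_iff.mpr (by omega)) τ
        / (Finset.range N).inf' (Finset.nonempty_range_iff.mpr (by omega)) ρ))
    (u v w : ℕ → ℝ) :
    ((∑ i ∈ Finset.range N, (u i)^2 * ρ i * Δx)
        + (∑ i ∈ Finset.range (N - 1), ((v i + w i) / 2)^2 * (τ i)⁻¹ * Δx)
        - (Δt / 2)^2
          * ∑ i ∈ Finset.range (N - 1), (τ i * (u (i + 1) - u i) / Δx)^2 * (τ i)⁻¹ * Δx
      ≥ (1 - (s * Δt / Δx)^2) * (∑ i ∈ Finset.range N, (u i)^2 * ρ i * Δx)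
        + (∑ i ∈ Finset.range (N - 1), ((v i + w i) / 2)^2 * (τ i)⁻¹ * Δx))
    ∧ (s * Δt / Δx ≤ 1 →
      0 ≤ (∑ i ∈ Finset.range N, (u i)^2 * ρ i * Δx)
        + (∑ i ∈ Finset.range (N - 1), ((v i + w i) / 2)^2 * (τ i)⁻¹ * Δx)
        - (Δt / 2)^2
          * ∑ i ∈ Finset.range (N - 1), (τ i * (u (i + 1) - u i) / Δx)^2 * (τ i)⁻¹ * Δx) := by
  have hne1 : (Finset.range (N-1)).Nonempty := Finset.nonempty_range_iff.mpr (by omega)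
  have hne2 : (Finset.range N).Nonempty := Finset.nonempty_range_iff.mpr (by omega)
  set M := (Finset.range (N - 1)).sup' hne1 τ with hM
  set m := (Finset.range N).inf' hne2 ρ with hm
  have hMpos : 0 < M := by
    obtain ⟨i, hi, hle⟩ := Finset.exists_mem_eq_sup' hne1 τ
    rw [hM, hle]; exact hτ i (Finset.mem_range.mp hi)
  have hmpos : 0 < m := by
    obtain ⟨i, hi, hle⟩ := Finset.exists_mem_eq_inf' hne2 ρ
    rw [hm, hle]; exact hρ i (Finset.mem_range.mp hi)
  have hs2 : s^2 = M / m := by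
    rw [hs, Real.sq_sqrt (by positivity)]
  set U := ∑ i ∈ Finset.range N, (u i)^2 * ρ i * Δx with hU
  set V := ∑ i ∈ Finset.range (N - 1), ((v i + w i) / 2)^2 * (τ i)⁻¹ * Δx with hV
  set A := ∑ i ∈ Finset.range (N - 1), (τ i * (u (i + 1) - u i) / Δx)^2 * (τ i)⁻¹ * Δx with hA
  clear_value M m U V A
  have hUnn : 0 ≤ U := by
    rw [hU]; apply Finset.sum_nonneg; intro i hi
    have := hρ i (Finset.mem_range.mp hi); positivity
  have hVnn : 0 ≤ V := by
    rw [hV]; apply Finset.sum_nonneg; intro i hi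
    have := hτ i (Finset.mem_range.mp hi); positivity
  -- A = (1/Δx) * ∑ τ i * d i ^2
  have hAeq : A = (1/Δx) * ∑ i ∈ Finset.range (N-1), τ i * (u (i+1) - u i)^2 := by
    rw [hA, Finset.mul_sum]
    apply Finset.sum_congr rfl
    intro i hi
    have hti : τ i ≠ 0 := ne_of_gt (hτ i (Finset.mem_range.mp hi))
    field_simp
  have step2 : ∑ i ∈ Finset.range (N-1), τ i * (u (i+1) - u i)^2
      ≤ M * ∑ i ∈ Finset.range (N-1), (u (i+1) - u i)^2 := by
    rw [Finset.mul_sum]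
    apply Finset.sum_le_sum
    intro i hi
    have h1 : τ i ≤ M := by rw [hM]; exact Finset.le_sup' τ hi
    nlinarith [sq_nonneg (u (i+1) - u i)]
  have step3 : ∑ i ∈ Finset.range (N-1), (u (i+1) - u i)^2
      ≤ 4 * ∑ i ∈ Finset.range N, (u i)^2 := by
    have h1 : ∑ i ∈ Finset.range (N-1), (u (i+1) - u i)^2
        ≤ ∑ i ∈ Finset.range (N-1), (2*(u (i+1))^2 + 2*(u i)^2) := by
      apply Finset.sum_le_sum
      intro i _
      nlinarith [sq_nonneg (u (i+1) + u i)]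
    have h2 : ∑ i ∈ Finset.range (N-1), (u (i+1))^2 ≤ ∑ i ∈ Finset.range N, (u i)^2 := by
      have heq : ∑ i ∈ Finset.Ico 1 N, (u i)^2
          = ∑ i ∈ Finset.range (N-1), (u (i+1))^2 := by
        rw [Finset.sum_Ico_eq_sum_range]
        apply Finset.sum_congr (by congr 1)
        intro i _; rw [add_comm]
      rw [← heq, Finset.range_eq_Ico]
      apply Finset.sum_le_sum_of_subset_of_nonneg (Finset.Ico_subset_Ico (by omega) le_rfl)
      intro i _ _; positivity
    have h3 : ∑ i ∈ Finset.range (N-1), (u i)^2 ≤ ∑ i ∈ Finset.range N, (u i)^2 := by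
      apply Finset.sum_le_sum_of_subset_of_nonneg
        (Finset.range_subset_range.mpr (by omega))
      intro i _ _; positivity
    rw [Finset.sum_add_distrib, ← Finset.mul_sum, ← Finset.mul_sum] at h1
    linarith
  have step4 : (m * ∑ i ∈ Finset.range N, (u i)^2) * Δx ≤ U := by
    rw [hU, Finset.mul_sum, Finset.sum_mul]
    apply Finset.sum_le_sum
    intro i hi
    have h1 : m ≤ ρ i := by rw [hm]; exact Finset.inf'_le ρ hi
    nlinarith [mul_nonneg (mul_nonneg (sub_nonneg.mpr h1) (sq_nonneg (u i))) hΔx.le]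
  -- key : (Δt/2)^2 * A ≤ (s*Δt/Δx)^2 * U
  have key : (Δt/2)^2 * A ≤ (s*Δt/Δx)^2 * U := by
    have hAle : A ≤ (1/Δx) * (M * (4 * ∑ i ∈ Finset.range N, (u i)^2)) := by
      rw [hAeq]
      apply mul_le_mul_of_nonneg_left _ (by positivity)
      calc ∑ i ∈ Finset.range (N-1), τ i * (u (i+1) - u i)^2
          ≤ M * ∑ i ∈ Finset.range (N-1), (u (i+1) - u i)^2 := step2
        _ ≤ M * (4 * ∑ i ∈ Finset.range N, (u i)^2) := by
            apply mul_le_mul_of_nonneg_left _ (le_of_lt hMpos)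
            linarith
    have hS : ∑ i ∈ Finset.range N, (u i)^2 ≤ U / (Δx * m) := by
      rw [le_div_iff₀ (by positivity)]
      calc (∑ i ∈ Finset.range N, (u i)^2) * (Δx * m)
          = (m * ∑ i ∈ Finset.range N, (u i)^2) * Δx := by ring
        _ ≤ U := step4
    have hrhs : (s*Δt/Δx)^2 * U = (M/m) * Δt^2 / Δx^2 * U := by
      rw [div_pow, mul_pow, hs2]
    rw [hrhs]
    have hS2 : M * (4 * ∑ i ∈ Finset.range N, (u i)^2) ≤ M * (4 * (U / (Δx * m))) :=
      mul_le_mul_of_nonneg_left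
        (mul_le_mul_of_nonneg_left hS (by norm_num)) hMpos.le
    have hA2 : A ≤ (1/Δx) * (M * (4 * (U / (Δx * m)))) :=
      hAle.trans (mul_le_mul_of_nonneg_left hS2 (by positivity))
    calc (Δt/2)^2 * A ≤ (Δt/2)^2 * ((1/Δx) * (M * (4 * (U / (Δx * m))))) :=
          mul_le_mul_of_nonneg_left hA2 (by positivity)
      _ = (M/m) * Δt^2 / Δx^2 * U := by field_simp; ring
  constructor
  · linarith [key]
  · intro hcfl
    have hsnn : 0 ≤ s := by rw [hs]; exact Real.sqrt_nonneg _
    have hc : 0 ≤ s*Δt/Δx := by positivity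
    have h1 : (s*Δt/Δx)^2 ≤ 1 := by nlinarith
    have h2 : (s*Δt/Δx)^2 * U ≤ U := by nlinarith
    linarith [key]
end

section
/- Fix an integer N ≥ 3, Δx > 0, Δt > 0, and let ρ : {0,…,N−1} → ℝ and τ : {0,…,N−2} → ℝ have positive values. Set s = √(max τ / min ρ), where max τ = max_{0≤i≤N−2} τ_i and min ρ = min_{0≤i≤N−1} ρ_i. Then for any primal-grid functions u, w and dual-grid function v, the quantity C = ‖(u + w)/2‖_ρ² + ‖v‖_τ² − (Δt/2)²·‖A*v‖_ρ², with (A*v)_i = −(v_i − v_{i−1})/(ρ_i·Δx) for 1 ≤ i ≤ N−2 and (A*v)_0 = (A*v)_{N−1} = 0, satisfies C ≥ ‖(u + w)/2‖_ρ² + (1 − (s·Δt/Δx)²)·‖v‖_τ². In particular, C ≥ 0 whenever s·Δt/Δx ≤ 1. -/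
/-- Positivity of the dual conserved quantity under the generalized CFL condition:
with `s = √(max τ / min ρ)`, the quantity
`C = ‖(u+w)/2‖_ρ² + ‖v‖_τ² − (Δt/2)² ‖A*v‖_ρ²` satisfies
`C ≥ ‖(u+w)/2‖_ρ² + (1 − (sΔt/Δx)²)‖v‖_τ²`, hence `C ≥ 0` whenever `sΔt/Δx ≤ 1`. -/
theorem stmt_17
    (N : ℕ) (hN : 3 ≤ N) (Δx Δt : ℝ) (hΔx : 0 < Δx) (hΔt : 0 < Δt)
    (ρ τ : ℕ → ℝ)
    (hρ : ∀ i < N, 0 < ρ i) (hτ : ∀ i < N - 1, 0 < τ i)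
    (s : ℝ)
    (hs : s = Real.sqrt
      ((Finset.range (N - 1)).sup' (Finset.nonempty_range_iff.mpr (by omega)) τ
        / (Finset.range N).inf' (Finset.nonempty_range_iff.mpr (by omega)) ρ))
    (u w v : ℕ → ℝ) :
    ((∑ i ∈ Finset.range N, ((u i + w i) / 2)^2 * ρ i * Δx)
        + (∑ i ∈ Finset.range (N - 1), (v i)^2 * (τ i)⁻¹ * Δx)
        - (Δt / 2)^2
          * ∑ i ∈ Finset.range N,
              (if 1 ≤ i ∧ i ≤ N - 2 then -((v i - v (i - 1)) / (ρ i * Δx)) else 0)^2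
                * ρ i * Δx
      ≥ (∑ i ∈ Finset.range N, ((u i + w i) / 2)^2 * ρ i * Δx)
        + (1 - (s * Δt / Δx)^2) * (∑ i ∈ Finset.range (N - 1), (v i)^2 * (τ i)⁻¹ * Δx))
    ∧ (s * Δt / Δx ≤ 1 →
      0 ≤ (∑ i ∈ Finset.range N, ((u i + w i) / 2)^2 * ρ i * Δx)
        + (∑ i ∈ Finset.range (N - 1), (v i)^2 * (τ i)⁻¹ * Δx)
        - (Δt / 2)^2
          * ∑ i ∈ Finset.range N,
              (if 1 ≤ i ∧ i ≤ N - 2 then -((v i - v (i - 1)) / (ρ i * Δx)) else 0)^2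
                * ρ i * Δx) := by

  have hN1 : (Finset.range (N - 1)).Nonempty := Finset.nonempty_range_iff.mpr (by omega)
  have hN0 : (Finset.range N).Nonempty := Finset.nonempty_range_iff.mpr (by omega)
  set M := (Finset.range (N - 1)).sup' hN1 τ with hM
  set m := (Finset.range N).inf' hN0 ρ with hm
  have hmpos : 0 < m := by
    obtain ⟨j, hj, hje⟩ := Finset.exists_mem_eq_inf' hN0 ρ
    rw [hm, hje]; exact hρ j (Finset.mem_range.mp hj)
  have hMpos : 0 < M := by
    obtain ⟨j, hj, hje⟩ := Finset.exists_mem_eq_sup' hN1 τ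
    rw [hM, hje]; exact hτ j (Finset.mem_range.mp hj)
  have hs2 : s ^ 2 = M / m := by
    rw [hs, Real.sq_sqrt (by positivity)]
  have hsnn : 0 ≤ s := by rw [hs]; exact Real.sqrt_nonneg _
  set A := ∑ i ∈ Finset.range N,
      (if 1 ≤ i ∧ i ≤ N - 2 then -((v i - v (i - 1)) / (ρ i * Δx)) else 0)^2 * ρ i * Δx
    with hA
  set S := ∑ i ∈ Finset.range (N - 1), (v i)^2 * (τ i)⁻¹ with hS
  have hSnn : 0 ≤ S := by
    apply Finset.sum_nonneg
    intro i hi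
    have := hτ i (Finset.mem_range.mp hi)
    positivity
  -- step 1 : A ≤ (4/(m*Δx)) * ∑ v²
  have step1 : A ≤ (4 / (m * Δx)) * ∑ i ∈ Finset.range (N - 1), (v i)^2 := by
    have h1 : A ≤ ∑ i ∈ Finset.range N,
        (if 1 ≤ i ∧ i ≤ N - 2 then (2 / (m * Δx)) * ((v i)^2 + (v (i-1))^2) else 0) := by
      apply Finset.sum_le_sum
      intro i hi
      by_cases hc : 1 ≤ i ∧ i ≤ N - 2
      · rw [if_pos hc, if_pos hc]
        have hiN : i < N := Finset.mem_range.mp hi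
        have hρi : 0 < ρ i := hρ i hiN
        have hmi : m ≤ ρ i := Finset.inf'_le ρ hi
        have key1 : (-((v i - v (i-1)) / (ρ i * Δx)))^2 * ρ i * Δx
            = (v i - v (i-1))^2 / (ρ i * Δx) := by
          field_simp
        rw [key1]
        have h2 : (v i - v (i-1))^2 / (ρ i * Δx) ≤ (v i - v (i-1))^2 / (m * Δx) := by
          apply div_le_div_of_nonneg_left (by positivity) (by positivity)
          exact mul_le_mul_of_nonneg_right hmi hΔx.le
        refine h2.trans ?_
        rw [div_le_iff₀ (by positivity)]
        have : (v i - v (i-1))^2 ≤ 2 * ((v i)^2 + (v (i-1))^2) := by nlinarith [sq_nonneg (v i + v (i-1))]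
        calc (v i - v (i-1))^2 ≤ 2 * ((v i)^2 + (v (i-1))^2) := this
          _ = 2 / (m * Δx) * ((v i)^2 + (v (i-1))^2) * (m * Δx) := by field_simp
      · simp [hc]
    refine h1.trans ?_
    have hfilter : (Finset.range N).filter (fun i => 1 ≤ i ∧ i ≤ N - 2) = Finset.Ico 1 (N-1) := by
      ext i; simp only [Finset.mem_filter, Finset.mem_range, Finset.mem_Ico]; omega
    rw [Finset.sum_ite, Finset.sum_const_zero, add_zero, hfilter]
    simp only [mul_add]
    rw [Finset.sum_add_distrib]
    have e0 : (4 / (m * Δx)) * ∑ i ∈ Finset.range (N-1), (v i)^2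
        = (2 / (m * Δx)) * ∑ i ∈ Finset.range (N-1), (v i)^2
          + (2 / (m * Δx)) * ∑ i ∈ Finset.range (N-1), (v i)^2 := by ring
    rw [Finset.mul_sum] at e0
    have e1 : ∑ i ∈ Finset.Ico 1 (N-1), (2 / (m * Δx)) * (v i)^2
        ≤ (2 / (m * Δx)) * ∑ i ∈ Finset.range (N-1), (v i)^2 := by
      rw [Finset.mul_sum]
      apply Finset.sum_le_sum_of_subset_of_nonneg
      · intro i hi; simp only [Finset.mem_Ico] at hi; exact Finset.mem_range.mpr hi.2
      · intro i _ _; positivity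
    have e2 : ∑ i ∈ Finset.Ico 1 (N-1), (2 / (m * Δx)) * (v (i-1))^2
        ≤ (2 / (m * Δx)) * ∑ i ∈ Finset.range (N-1), (v i)^2 := by
      rw [Finset.sum_Ico_eq_sum_range]
      have : ∀ i, 1 + i - 1 = i := fun i => by omega
      simp only [this]
      rw [Finset.mul_sum]
      apply Finset.sum_le_sum_of_subset_of_nonneg
      · intro i hi; simp only [Finset.mem_range] at hi ⊢; omega
      · intro i _ _; positivity
    calc _ ≤ (2 / (m * Δx)) * ∑ i ∈ Finset.range (N-1), (v i)^2
            + (2 / (m * Δx)) * ∑ i ∈ Finset.range (N-1), (v i)^2 := add_le_add e1 e2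
      _ = _ := by rw [Finset.mul_sum, Finset.mul_sum, ← Finset.mul_sum, ← Finset.mul_sum]; ring
  -- step 2 : ∑ v² ≤ M * S
  have step2 : ∑ i ∈ Finset.range (N - 1), (v i)^2 ≤ M * S := by
    rw [hS, Finset.mul_sum]
    apply Finset.sum_le_sum
    intro i hi
    have hτi : 0 < τ i := hτ i (Finset.mem_range.mp hi)
    have hMi : τ i ≤ M := Finset.le_sup' τ hi
    have h := mul_le_mul_of_nonneg_right hMi (show (0:ℝ) ≤ (v i)^2 * (τ i)⁻¹ by positivity)
    have heq : τ i * ((v i)^2 * (τ i)⁻¹) = (v i)^2 := by field_simp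
    linarith
  -- key inequality
  have key : (Δt / 2)^2 * A ≤ (s * Δt / Δx)^2 * (S * Δx) := by
    have h3 : A ≤ (4 / (m * Δx)) * (M * S) := by
      refine step1.trans ?_
      exact mul_le_mul_of_nonneg_left step2 (by positivity)
    have h4 : (Δt / 2)^2 * A ≤ (Δt / 2)^2 * ((4 / (m * Δx)) * (M * S)) :=
      mul_le_mul_of_nonneg_left h3 (by positivity)
    refine h4.trans_eq ?_
    have : (s * Δt / Δx)^2 = s^2 * Δt^2 / Δx^2 := by ring
    rw [this, hs2]
    field_simp
    ring
  have hBeq : (∑ i ∈ Finset.range (N - 1), (v i)^2 * (τ i)⁻¹ * Δx) = S * Δx := by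
    rw [hS, Finset.sum_mul]
  have hsum1 : 0 ≤ ∑ i ∈ Finset.range N, ((u i + w i) / 2)^2 * ρ i * Δx := by
    apply Finset.sum_nonneg
    intro i hi
    have := hρ i (Finset.mem_range.mp hi)
    positivity
  constructor
  · rw [hBeq]
    linarith [key]
  · intro hq
    rw [hBeq]
    have hqnn : 0 ≤ s * Δt / Δx := by positivity
    have hq2 : (s * Δt / Δx)^2 ≤ 1 := by nlinarith
    nlinarith [mul_nonneg hSnn hΔx.le, key]
end
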